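/- Let q ∈ (0,1) and consider the operator M defined on functions of one variable by (Mf)(x) = f(q^{-1}x) (i.e., T_{q^{-1},x}), and the first-order spin q-Whittaker operators on symmetric polynomials in N variables: 𝔇₁ = ∑_{i=1}^N ∏_{j≠i} (1+s x_i)/(1 − x_i/x_j) · T_{q,x_i} and 𝔇̄₁ = ∑_{i=1}^N ∏_{j≠i} (1+s/x_i)/(1 − x_j/x_i) · T_{q^{-1},x_i}. Then for N = 2 and any symmetric polynomial F(x₁,x₂), 𝔇₁𝔇̄₁F = 𝔇̄₁𝔇₁F. -/

import Mathlib

/-- The first spin q-Whittaker difference operator for `N = 2`: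
`(𝔇₁F)(x₁,x₂) = (1+sx₁)/(1−x₁/x₂)·F(qx₁,x₂) + (1+sx₂)/(1−x₂/x₁)·F(x₁,qx₂)`. -/
noncomputable def D1 (q s : ℝ) (F : ℝ → ℝ → ℝ) : ℝ → ℝ → ℝ := fun x₁ x₂ =>
  (1 + s * x₁) / (1 - x₁ / x₂) * F (q * x₁) x₂
    + (1 + s * x₂) / (1 - x₂ / x₁) * F x₁ (q * x₂)

/-- The second spin q-Whittaker difference operator for `N = 2`:
`(𝔇̄₁F)(x₁,x₂) = (1+s/x₁)/(1−x₂/x₁)·F(q⁻¹x₁,x₂) + (1+s/x₂)/(1−x₁/x₂)·F(x₁,q⁻¹x₂)`. -/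
noncomputable def Dbar1 (q s : ℝ) (F : ℝ → ℝ → ℝ) : ℝ → ℝ → ℝ := fun x₁ x₂ =>
  (1 + s / x₁) / (1 - x₂ / x₁) * F (q⁻¹ * x₁) x₂
    + (1 + s / x₂) / (1 - x₁ / x₂) * F x₁ (q⁻¹ * x₂)

/-- For `N = 2`, the operators `𝔇₁` and `𝔇̄₁` commute on any symmetric
polynomial `F(x₁,x₂)` (as an identity of rational functions, i.e. wherever
the denominators are nonzero). -/
theorem D1_Dbar1_comm (q s : ℝ) (hq : q ∈ Set.Ioo (0 : ℝ) 1)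
    (P : MvPolynomial (Fin 2) ℝ)
    (hsym : ∀ a b : ℝ, MvPolynomial.eval ![a, b] P = MvPolynomial.eval ![b, a] P)
    (x₁ x₂ : ℝ) (h₁ : x₁ ≠ 0) (h₂ : x₂ ≠ 0) (h₁₂ : x₁ ≠ x₂)
    (hq₁ : q * x₁ ≠ x₂) (hq₂ : x₁ ≠ q * x₂) :
    D1 q s (Dbar1 q s (fun a b => MvPolynomial.eval ![a, b] P)) x₁ x₂
      = Dbar1 q s (D1 q s (fun a b => MvPolynomial.eval ![a, b] P)) x₁ x₂ := by
  obtain ⟨hq0, hq1'⟩ := hq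
  have hqne : q ≠ 0 := ne_of_gt hq0
  have e1 : q⁻¹ * (q * x₁) = x₁ := by field_simp
  have e2 : q⁻¹ * (q * x₂) = x₂ := by field_simp
  have e3 : q * (q⁻¹ * x₁) = x₁ := by field_simp
  have e4 : q * (q⁻¹ * x₂) = x₂ := by field_simp
  simp only [D1, Dbar1, e1, e2, e3, e4]
  have n1 : x₂ - x₁ ≠ 0 := sub_ne_zero.mpr (Ne.symm h₁₂)
  have n2 : x₁ - x₂ ≠ 0 := sub_ne_zero.mpr h₁₂
  have n3 : x₂ - q * x₁ ≠ 0 := sub_ne_zero.mpr (Ne.symm hq₁)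
  have n4 : q * x₁ - x₂ ≠ 0 := sub_ne_zero.mpr hq₁
  have n5 : x₁ - q * x₂ ≠ 0 := sub_ne_zero.mpr hq₂
  have n6 : q * x₂ - x₁ ≠ 0 := sub_ne_zero.mpr (Ne.symm hq₂)
  have r1 : 1 - x₁ / x₂ = (x₂ - x₁) / x₂ := by field_simp
  have r2 : 1 - x₂ / x₁ = (x₁ - x₂) / x₁ := by field_simp
  have r3 : 1 - x₂ / (q * x₁) = (q * x₁ - x₂) / (q * x₁) := by field_simp
  have r4 : 1 - q * x₁ / x₂ = (x₂ - q * x₁) / x₂ := by field_simp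
  have r5 : 1 - q * x₂ / x₁ = (x₁ - q * x₂) / x₁ := by field_simp
  have r6 : 1 - x₁ / (q * x₂) = (q * x₂ - x₁) / (q * x₂) := by field_simp
  have r7 : 1 - q⁻¹ * x₂ / x₁ = (q * x₁ - x₂) / (q * x₁) := by
    rw [eq_div_iff (by positivity)]; field_simp; try ring
  have r8 : 1 - x₂ / (q⁻¹ * x₁) = (x₁ - q * x₂) / x₁ := by
    rw [eq_div_iff h₁]; field_simp; try ring
  have r9 : 1 - q⁻¹ * x₁ / x₂ = (q * x₂ - x₁) / (q * x₂) := by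
    rw [eq_div_iff (by positivity)]; field_simp; try ring
  have r10 : 1 - x₁ / (q⁻¹ * x₂) = (x₂ - q * x₁) / x₂ := by
    rw [eq_div_iff h₂]; field_simp; try ring
  rw [r1, r2, r3, r4, r5, r6, r7, r8, r9, r10]
  set a := MvPolynomial.eval ![x₁, x₂] P with ha
  set b := MvPolynomial.eval ![q * x₁, q⁻¹ * x₂] P with hb
  set c := MvPolynomial.eval ![q⁻¹ * x₁, q * x₂] P with hc
  have n7 : x₁ * q - x₂ ≠ 0 := by rwa [mul_comm]
  have n8 : x₂ * q - x₁ ≠ 0 := by rwa [mul_comm]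
  field_simp
  ring
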